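/- Let f: Ω → Ω' be an η-quasisymmetric homeomorphism between minimally nice metric spaces and let γ ⊂ Ω be a strong L-cigar arc with endpoints a, b. Then f(γ) is a strong L'-cigar arc with L' = 2η(2η'(2)L) ∨ 2η(L), where η'(t) = 1/η^{−1}(1/t) is the control function of f^{−1}. -/

import Mathlib

open Filter Set Metric Real MeasureTheory UniformSpace
open Topology

noncomputable section

/-- The metric boundary of `Ω`: the complement of `Ω` in its metric completion. -/
def mbdry (Ω : Type*) [MetricSpace Ω] : Set (Completion Ω) :=
  (Set.range ((↑) : Ω → Completion Ω))ᶜ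

/-- The distance `d(x) = dist(x, ∂Ω)` from `x` to the metric boundary of `Ω`. -/
def bdist {Ω : Type*} [MetricSpace Ω] (x : Ω) : ℝ :=
  Metric.infDist (x : Completion Ω) (mbdry Ω)

/-- `Ω` is an `A`-uniform metric space: every pair of points is joined by an
(arclength parametrized) curve that is `A`-quasiconvex and satisfies the `A`-cigar
condition with respect to the distance to the metric boundary. -/
def IsUniformSpaceA (Ω : Type*) [MetricSpace Ω] (A : ℝ) : Prop :=
  ∀ x y : Ω, ∃ T : ℝ, ∃ γ : ℝ → Ω, 0 ≤ T ∧ γ 0 = x ∧ γ T = y ∧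
    (∀ a ∈ Icc (0:ℝ) T, ∀ b ∈ Icc (0:ℝ) T, dist (γ a) (γ b) ≤ |a - b|) ∧
    eVariationOn γ (Icc 0 T) ≤ ENNReal.ofReal (A * dist x y) ∧
    ∀ t ∈ Icc (0:ℝ) T,
      min (eVariationOn γ (Icc 0 t)) (eVariationOn γ (Icc t T)) ≤
        ENNReal.ofReal (A * bdist (γ t))

/-- A strong `A`-cigar arc (parametrized on `[0,T]`) from `x = γ 0` to `y = γ T`:
`diam γ ≤ A·d(x,y)` and for all `t`, `min(diam γ[x,z], diam γ[z,y]) ≤ A·d(z)`. -/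
def IsStrongCigar {Ω : Type*} [MetricSpace Ω] (γ : ℝ → Ω) (T A : ℝ) : Prop :=
  Metric.diam (γ '' Icc 0 T) ≤ A * dist (γ 0) (γ T) ∧
  ∀ t ∈ Icc (0:ℝ) T,
    min (Metric.diam (γ '' Icc 0 t)) (Metric.diam (γ '' Icc t T)) ≤ A * bdist (γ t)

/-- Inverse quasisymmetry estimate obtained from the direct one by contraposition. -/
lemma qs_inv_est {Ω Ω' : Type*} [MetricSpace Ω] [MetricSpace Ω']
    (f : Ω ≃ₜ Ω') (η : ℝ → ℝ)
    (hqs : ∀ (x a b : Ω) (u : ℝ), 0 ≤ u →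
      dist x a ≤ u * dist x b → dist (f x) (f a) ≤ η u * dist (f x) (f b))
    (x a b : Ω) (s : ℝ) (hs : 0 < s)
    (h : dist (f x) (f a) * η (1 / s) < dist (f x) (f b)) :
    dist x a ≤ s * dist x b := by
  by_contra hcon
  push_neg at hcon
  have hxb : dist x b ≤ (1 / s) * dist x a := by
    rw [div_mul_eq_mul_div, le_div_iff₀ hs]
    nlinarith
  have := hqs x b a (1 / s) (by positivity) hxb
  nlinarith

/-- Core estimate: if `dist z p ≤ L * bdist z` then
`dist (f z) (f p) ≤ η L * bdist (f z)`. -/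
lemma qs_bdist_est {Ω Ω' : Type*} [MetricSpace Ω] [MetricSpace Ω']
    (hnc' : (mbdry Ω').Nonempty)
    (f : Ω ≃ₜ Ω') (η : ℝ → ℝ)
    (hη0 : η 0 = 0) (hηmono : StrictMonoOn η (Ici 0)) (hηcont : ContinuousOn η (Ici 0))
    (hqs : ∀ (x a b : Ω) (u : ℝ), 0 ≤ u →
      dist x a ≤ u * dist x b → dist (f x) (f a) ≤ η u * dist (f x) (f b))
    (L : ℝ) (hL : 1 ≤ L) (z p : Ω) (hp : dist z p ≤ L * bdist z) :
    dist (f z) (f p) ≤ η L * bdist (f z) := by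
  have hηpos : ∀ v : ℝ, 0 < v → 0 < η v := fun v hv => by
    have := hηmono self_mem_Ici (le_of_lt hv) hv
    rwa [hη0] at this
  have hd0 : 0 ≤ bdist z := Metric.infDist_nonneg
  -- Key pointwise estimate against any boundary point of `Ω'`.
  have key : ∀ u : ℝ, L < u → ∀ ζ ∈ mbdry Ω',
      dist (f z) (f p) ≤ η u * dist ((f z : Ω') : Completion Ω') ζ := by
    intro u hu ζ hζ
    have hu0 : (0:ℝ) < u := by linarith
    rcases eq_or_lt_of_le hd0 with hdz | hdz
    · -- degenerate case : `bdist z = 0`, hence `p = z`.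
      have hzp : dist z p ≤ 0 := by
        have : L * bdist z = 0 := by rw [← hdz, mul_zero]
        linarith [hp, this ▸ hp]
      have hpz : p = z := by
        have := le_antisymm hzp dist_nonneg
        exact (dist_eq_zero.mp this).symm
      subst hpz
      have : dist (f p) (f p) = 0 := dist_self _
      rw [this]
      have := hηpos u hu0
      positivity
    · -- main case : `bdist z > 0`.
      set d := bdist z with hd
      -- a sequence in `Ω'` approaching `ζ`
      have hdr : ∀ n : ℕ, ∃ y : Ω', dist ζ ((y : Completion Ω')) < 1 / (n + 1) := by
        intro n
        exact Metric.denseRange_iff.mp Completion.denseRange_coe ζ _ (by positivity)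
      choose w' hw' using hdr
      have htend : Tendsto (fun n => ((w' n : Completion Ω'))) atTop (𝓝 ζ) := by
        rw [tendsto_iff_dist_tendsto_zero]
        refine squeeze_zero (fun n => dist_nonneg) (fun n => ?_)
          tendsto_one_div_add_atTop_nhds_zero_nat
        rw [dist_comm]
        exact (hw' n).le
      have hζr : ζ ∉ Set.range ((↑) : Ω' → Completion Ω') := hζ
      set β := dist ((f z : Ω') : Completion Ω') ζ with hβdef
      have hβ : 0 < β := by
        rw [hβdef, dist_pos]
        intro hEq
        exact hζr ⟨f z, hEq⟩
      have hfd : ∀ y : Ω', dist (f z) y = dist ((f z : Ω') : Completion Ω') (y : Completion Ω') :=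
        fun y => (Completion.dist_eq _ _).symm
      have hdconv : Tendsto (fun n => dist (f z) (w' n)) atTop (𝓝 β) := by
        simp only [hfd]
        exact tendsto_const_nhds.dist htend
      have hev1 : ∀ᶠ n in atTop, β / 2 ≤ dist (f z) (w' n) :=
        hdconv.eventually (eventually_ge_nhds (by linarith))
      set w : ℕ → Ω := fun n => f.symm (w' n) with hwdef
      have hfw : ∀ n, f (w n) = w' n := fun n => f.apply_symm_apply (w' n)
      set c := L * d / u with hcdef
      have hL0 : (0:ℝ) < L := by linarith
      have hc : 0 < c := by positivity
      have hcd : c < d := by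
        rw [hcdef, div_lt_iff₀ hu0]
        nlinarith
      have huc : u * c = L * d := by
        rw [hcdef]
        field_simp
      -- eventually the preimages stay at distance `> c` from `z`
      have hev2 : ∀ᶠ n in atTop, c < dist z (w n) := by
        by_contra hcon
        rw [Filter.not_eventually] at hcon
        have hfreq := hcon.and_eventually hev1
        obtain ⟨φ, hφ, hP⟩ := Filter.extraction_of_frequently_atTop hfreq
        have hPc : ∀ n, dist z (w (φ n)) ≤ c := fun n => not_lt.mp (hP n).1
        have hPβ : ∀ n, β / 2 ≤ dist (f z) (w' (φ n)) := fun n => (hP n).2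
        have hcs' : CauchySeq (fun n => ((w' (φ n) : Completion Ω'))) :=
          ((htend.comp hφ.tendsto_atTop)).cauchySeq
        -- the preimage subsequence is Cauchy
        have hwc : CauchySeq (fun n => w (φ n)) := by
          rw [Metric.cauchySeq_iff]
          intro ε hε
          set s₀ := ε / (2 * c) with hs₀def
          have hs₀ : 0 < s₀ := by positivity
          have hη₁ : 0 < η (1 / s₀) := hηpos _ (by positivity)
          obtain ⟨N, hN⟩ := Metric.cauchySeq_iff.mp hcs'
            (β / (2 * (η (1 / s₀) + 1))) (by positivity)
          refine ⟨N, fun m hm n hn => ?_⟩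
          have h1 := hN m hm n hn
          rw [Completion.dist_eq] at h1
          have hkey : dist (f (w (φ m))) (f (w (φ n))) * η (1 / s₀)
              < dist (f (w (φ m))) (f z) := by
            rw [hfw, hfw]
            have h2 : dist (w' (φ m)) (f z) = dist (f z) (w' (φ m)) := dist_comm _ _
            rw [h2]
            have h3 : dist (w' (φ m)) (w' (φ n)) * η (1 / s₀) < β / 2 := by
              have h4 : dist (w' (φ m)) (w' (φ n)) * η (1 / s₀)
                  < (β / (2 * (η (1 / s₀) + 1))) * (η (1 / s₀) + 1) := by
                have hdnn : (0:ℝ) ≤ dist (w' (φ m)) (w' (φ n)) := dist_nonneg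
                nlinarith
              have h5 : (β / (2 * (η (1 / s₀) + 1))) * (η (1 / s₀) + 1) = β / 2 := by
                field_simp
              linarith [h5 ▸ h4]
            exact lt_of_lt_of_le h3 (hPβ m)
          have h6 := qs_inv_est f η hqs (w (φ m)) (w (φ n)) z s₀ hs₀ hkey
          have h7 : dist (w (φ m)) z ≤ c := by rw [dist_comm]; exact hPc m
          have h8 : dist (w (φ m)) (w (φ n)) ≤ s₀ * c := by
            calc dist (w (φ m)) (w (φ n)) ≤ s₀ * dist (w (φ m)) z := h6
            _ ≤ s₀ * c := by nlinarith
          have h9 : s₀ * c = ε / 2 := by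
            rw [hs₀def]
            field_simp
          linarith
        -- its image in the completion of `Ω` converges
        have hccs : CauchySeq (fun n => ((w (φ n) : Ω) : Completion Ω)) :=
          (Completion.uniformContinuous_coe Ω).comp_cauchySeq hwc
        obtain ⟨ξ, hξ⟩ := cauchySeq_tendsto_of_complete hccs
        by_cases hξr : ξ ∈ Set.range ((↑) : Ω → Completion Ω)
        · -- the limit lies in `Ω` : contradiction with `ζ ∈ ∂Ω'`
          obtain ⟨y, rfl⟩ := hξr
          have hwy : Tendsto (fun n => w (φ n)) atTop (𝓝 y) := by
            rw [tendsto_iff_dist_tendsto_zero]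
            have heq : ∀ n, dist (w (φ n)) y
                = dist ((w (φ n) : Ω) : Completion Ω) ((y : Completion Ω)) :=
              fun n => (Completion.dist_eq _ _).symm
            simp only [heq]
            exact tendsto_iff_dist_tendsto_zero.mp hξ
          have hfy : Tendsto (fun n => f (w (φ n))) atTop (𝓝 (f y)) :=
            (f.continuous.tendsto y).comp hwy
          have hfy' : Tendsto (fun n => ((w' (φ n) : Completion Ω'))) atTop
              (𝓝 ((f y : Ω') : Completion Ω')) := by
            have := ((Completion.continuous_coe Ω').tendsto (f y)).comp hfy
            simpa only [Function.comp_def, hfw] using this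
          have hlim := tendsto_nhds_unique (htend.comp hφ.tendsto_atTop) hfy'
          exact hζr ⟨f y, hlim.symm⟩
        · -- the limit lies on `∂Ω` : contradiction with `c < d`
          have hξb : ξ ∈ mbdry Ω := hξr
          have h4 : d ≤ dist ((z : Ω) : Completion Ω) ξ :=
            Metric.infDist_le_dist_of_mem hξb
          have h5 : dist ((z : Ω) : Completion Ω) ξ ≤ c := by
            refine le_of_tendsto (tendsto_const_nhds.dist hξ) ?_
            filter_upwards with n
            rw [Completion.dist_eq]
            exact hPc n
          linarith
      -- conclude the key estimate
      have hev3 : ∀ᶠ n in atTop, dist (f z) (f p)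
          ≤ η u * dist ((f z : Ω') : Completion Ω') ((w' n : Completion Ω')) := by
        filter_upwards [hev2] with n hn
        have h6 : dist z p ≤ u * dist z (w n) := by
          calc dist z p ≤ L * d := hp
          _ = u * c := huc.symm
          _ ≤ u * dist z (w n) := by nlinarith
        have h7 := hqs z p (w n) u hu0.le h6
        rw [hfw n, hfd (w' n)] at h7
        exact h7
      have hlim : Tendsto (fun n => η u * dist ((f z : Ω') : Completion Ω')
          ((w' n : Completion Ω'))) atTop (𝓝 (η u * β)) :=
        (tendsto_const_nhds.dist htend).const_mul (η u)
      exact ge_of_tendsto hlim hev3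
  -- pass from boundary points to the infimum
  have key2 : ∀ u : ℝ, L < u → dist (f z) (f p) ≤ η u * bdist (f z) := by
    intro u hu
    by_contra hcon
    push_neg at hcon
    have hηu : 0 < η u := hηpos u (by linarith)
    have h7 : Metric.infDist ((f z : Ω') : Completion Ω') (mbdry Ω')
        < dist (f z) (f p) / η u := by
      rw [lt_div_iff₀ hηu]
      calc Metric.infDist ((f z : Ω') : Completion Ω') (mbdry Ω') * η u
          = η u * bdist (f z) := by rw [mul_comm]; rfl
      _ < dist (f z) (f p) := hcon
    obtain ⟨ζ, hζ, hζd⟩ := (Metric.infDist_lt_iff hnc').mp h7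
    have h8 := key u hu ζ hζ
    rw [lt_div_iff₀ hηu] at hζd
    nlinarith
  -- take the limit `u → L⁺`
  have hLmem : L ∈ Ici (0:ℝ) := by
    simp only [mem_Ici]; linarith
  have hcontL : ContinuousWithinAt η (Ici 0) L := hηcont L hLmem
  have hu_t : Tendsto (fun n : ℕ => L + 1 / (n + 1)) atTop (𝓝[Ici 0] L) := by
    apply tendsto_nhdsWithin_of_tendsto_nhds_of_eventually_within
    · have := tendsto_const_nhds (x := L) (f := atTop (α := ℕ)) |>.add
        tendsto_one_div_add_atTop_nhds_zero_nat
      simpa using this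
    · filter_upwards with n
      have : (0:ℝ) < 1 / (n + 1) := by positivity
      simp only [mem_Ici]
      linarith
  have hηt : Tendsto (fun n : ℕ => η (L + 1 / (n + 1)) * bdist (f z)) atTop
      (𝓝 (η L * bdist (f z))) :=
    (hcontL.tendsto.comp hu_t).mul_const _
  refine ge_of_tendsto hηt ?_
  filter_upwards with n
  have h10 : (0:ℝ) < 1 / ((n:ℝ) + 1) := by positivity
  exact key2 _ (by linarith)

/-- Diameter version of the core estimate. -/
lemma qs_diam_est {Ω Ω' : Type*} [MetricSpace Ω] [MetricSpace Ω']
    (hnc' : (mbdry Ω').Nonempty)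
    (f : Ω ≃ₜ Ω') (η : ℝ → ℝ)
    (hη0 : η 0 = 0) (hηmono : StrictMonoOn η (Ici 0)) (hηcont : ContinuousOn η (Ici 0))
    (hqs : ∀ (x a b : Ω) (u : ℝ), 0 ≤ u →
      dist x a ≤ u * dist x b → dist (f x) (f a) ≤ η u * dist (f x) (f b))
    (L : ℝ) (hL : 1 ≤ L) (z : Ω) (s : Set Ω) (hb : Bornology.IsBounded s) (hz : z ∈ s)
    (hsd : Metric.diam s ≤ L * bdist z) :
    Metric.diam (f '' s) ≤ 2 * η L * bdist (f z) := by
  have hηL : 0 < η L := by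
    have := hηmono self_mem_Ici (by linarith : (0:ℝ) ≤ L) (by linarith)
    rwa [hη0] at this
  have hbd : 0 ≤ bdist (f z) := Metric.infDist_nonneg
  apply Metric.diam_le_of_forall_dist_le (by positivity)
  rintro _ ⟨p, hp, rfl⟩ _ ⟨q, hq, rfl⟩
  have h1 : dist z p ≤ L * bdist z :=
    le_trans (Metric.dist_le_diam_of_mem hb hz hp) hsd
  have h2 : dist z q ≤ L * bdist z :=
    le_trans (Metric.dist_le_diam_of_mem hb hz hq) hsd
  have e1 := qs_bdist_est hnc' f η hη0 hηmono hηcont hqs L hL z p h1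
  have e2 := qs_bdist_est hnc' f η hη0 hηmono hηcont hqs L hL z q h2
  calc dist (f p) (f q) ≤ dist (f p) (f z) + dist (f z) (f q) := dist_triangle _ _ _
  _ = dist (f z) (f p) + dist (f z) (f q) := by rw [dist_comm (f p) (f z)]
  _ ≤ 2 * η L * bdist (f z) := by linarith

/-- Quasisymmetric maps preserve strong cigar arcs: if `f : Ω → Ω'` is an
`η`-quasisymmetric homeomorphism between minimally nice spaces and `γ` is a strong
`L`-cigar arc, then `f ∘ γ` is a strong `L'`-cigar arc with
`L' = 2η(2η'(2)L) ∨ 2η(L)`, where `η'(t) = 1/η⁻¹(1/t)` is the control function of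
`f⁻¹`. -/
theorem strong_cigar_qs_invariant {Ω Ω' : Type*} [MetricSpace Ω] [MetricSpace Ω']
    [LocallyCompactSpace Ω] [LocallyCompactSpace Ω']
    (hnc : (mbdry Ω).Nonempty) (hnc' : (mbdry Ω').Nonempty)
    (f : Ω ≃ₜ Ω') (η η' : ℝ → ℝ)
    (hη0 : η 0 = 0) (hηmono : StrictMonoOn η (Ici 0)) (hηcont : ContinuousOn η (Ici 0))
    (hηsurj : ∀ y : ℝ, 0 ≤ y → ∃ u : ℝ, 0 ≤ u ∧ η u = y)
    (hqs : ∀ (x a b : Ω) (u : ℝ), 0 ≤ u →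
      dist x a ≤ u * dist x b → dist (f x) (f a) ≤ η u * dist (f x) (f b))
    (hη'pos : ∀ u : ℝ, 0 < u → 0 < η' u)
    (hη'def : ∀ u : ℝ, 0 < u → η (1 / η' u) = 1 / u)
    (L : ℝ) (hL : 1 ≤ L)
    (T : ℝ) (hT : 0 ≤ T) (γ : ℝ → Ω)
    (hcont : ContinuousOn γ (Icc 0 T)) (hinj : Set.InjOn γ (Icc 0 T))
    (hcigar : IsStrongCigar γ T L) :
    IsStrongCigar (fun u => f (γ u)) T (max (2 * η (2 * η' 2 * L)) (2 * η L)) := by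
  have hηL : 0 < η L := by
    have := hηmono self_mem_Ici (by linarith : (0:ℝ) ≤ L) (by linarith)
    rwa [hη0] at this
  have hmax : 2 * η L ≤ max (2 * η (2 * η' 2 * L)) (2 * η L) := le_max_right _ _
  constructor
  · -- quasiconvexity-type condition on the whole arc
    rcases eq_or_lt_of_le hT with rfl | hT0
    · simp
    · have hab : 0 < dist (γ 0) (γ T) := by
        rw [dist_pos]
        intro he
        have := hinj ⟨le_refl 0, hT⟩ ⟨hT, le_refl T⟩ he
        exact absurd this (ne_of_lt hT0)
      have hbd : Bornology.IsBounded (γ '' Icc 0 T) :=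
        (isCompact_Icc.image_of_continuousOn hcont).isBounded
      have hpt : ∀ u ∈ Icc (0:ℝ) T, dist (f (γ 0)) (f (γ u))
          ≤ η L * dist (f (γ 0)) (f (γ T)) := by
        intro u hu
        apply hqs (γ 0) (γ u) (γ T) L (by linarith)
        calc dist (γ 0) (γ u) ≤ Metric.diam (γ '' Icc 0 T) :=
              Metric.dist_le_diam_of_mem hbd ⟨0, ⟨le_refl 0, hT⟩, rfl⟩ ⟨u, hu, rfl⟩
        _ ≤ L * dist (γ 0) (γ T) := hcigar.1
      have hnn : 0 ≤ max (2 * η (2 * η' 2 * L)) (2 * η L) * dist (f (γ 0)) (f (γ T)) := by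
        apply mul_nonneg (le_trans (by linarith) hmax) dist_nonneg
      apply Metric.diam_le_of_forall_dist_le hnn
      rintro _ ⟨u, hu, rfl⟩ _ ⟨v, hv, rfl⟩
      have h1 := hpt u hu
      have h2 := hpt v hv
      have hD : 0 ≤ dist (f (γ 0)) (f (γ T)) := dist_nonneg
      calc dist (f (γ u)) (f (γ v))
          ≤ dist (f (γ u)) (f (γ 0)) + dist (f (γ 0)) (f (γ v)) := dist_triangle _ _ _
      _ = dist (f (γ 0)) (f (γ u)) + dist (f (γ 0)) (f (γ v)) := by
          rw [dist_comm (f (γ u)) (f (γ 0))]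
      _ ≤ 2 * η L * dist (f (γ 0)) (f (γ T)) := by linarith
      _ ≤ max (2 * η (2 * η' 2 * L)) (2 * η L) * dist (f (γ 0)) (f (γ T)) := by
          nlinarith
  · -- cigar condition
    intro t ht
    have hmin := hcigar.2 t ht
    have hbd' : 0 ≤ bdist (f (γ t)) := Metric.infDist_nonneg
    have himgl : (fun u => f (γ u)) '' Icc 0 t = f '' (γ '' Icc 0 t) := by
      rw [Set.image_image]
    have himgr : (fun u => f (γ u)) '' Icc t T = f '' (γ '' Icc t T) := by
      rw [Set.image_image]
    rcases min_le_iff.mp hmin with h | h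
    · apply min_le_of_left_le
      rw [himgl]
      have hbl : Bornology.IsBounded (γ '' Icc 0 t) :=
        (isCompact_Icc.image_of_continuousOn
          (hcont.mono (Icc_subset_Icc le_rfl ht.2))).isBounded
      have hzl : γ t ∈ γ '' Icc 0 t := ⟨t, ⟨ht.1, le_rfl⟩, rfl⟩
      have := qs_diam_est hnc' f η hη0 hηmono hηcont hqs L hL (γ t) (γ '' Icc 0 t) hbl hzl h
      calc Metric.diam (f '' (γ '' Icc 0 t)) ≤ 2 * η L * bdist (f (γ t)) := this
      _ ≤ max (2 * η (2 * η' 2 * L)) (2 * η L) * bdist (f (γ t)) :=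
          mul_le_mul_of_nonneg_right hmax hbd'
    · apply min_le_of_right_le
      rw [himgr]
      have hbr : Bornology.IsBounded (γ '' Icc t T) :=
        (isCompact_Icc.image_of_continuousOn
          (hcont.mono (Icc_subset_Icc ht.1 le_rfl))).isBounded
      have hzr : γ t ∈ γ '' Icc t T := ⟨t, ⟨le_rfl, ht.2⟩, rfl⟩
      have := qs_diam_est hnc' f η hη0 hηmono hηcont hqs L hL (γ t) (γ '' Icc t T) hbr hzr h
      calc Metric.diam (f '' (γ '' Icc t T)) ≤ 2 * η L * bdist (f (γ t)) := this
      _ ≤ max (2 * η (2 * η' 2 * L)) (2 * η L) * bdist (f (γ t)) :=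
          mul_le_mul_of_nonneg_right hmax hbd'
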